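/- Let p ≥ 1, let y_1,…,y_p be distinct complex numbers, and let μ_1,…,μ_p ∈ ℂ be such that N := Σ_j μ_j is an integer with N > −p. Define the formal Laurent series a(z) := z^N ∏_{j=1}^p (1 − y_j/z)^{μ_j} ∈ ℂ((z^{−1})), where (1−w)^{μ} := Σ_{k≥0} (μ(μ−1)⋯(μ−k+1)/k!) (−w)^k is the formal binomial series. Suppose that for every i = 0, 1, …, p−2 the coefficient of z^{−1} in a(z)·z^i vanishes. Then a(z) is a polynomial in z, i.e. the coefficient of z^{−k} in a(z) vanishes for every k ≥ 1. -/

import Mathlib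

open PowerSeries Finset

/-- The generalized binomial coefficient `μ(μ−1)⋯(μ−k+1)/k!` for `μ ∈ ℂ`. -/
noncomputable def genBinom (μ : ℂ) (k : ℕ) : ℂ :=
  (∏ m ∈ Finset.range k, (μ - m)) / (k.factorial : ℂ)

/-- The power series `A(w) = ∏ⱼ (1 − yⱼ w)^{μⱼ} ∈ ℂ[[w]]`, where
`(1 − w)^μ = Σ_k binom(μ,k) (−w)^k` is the formal binomial series. -/
noncomputable def binomProdSeries (p : ℕ) (y μ : Fin p → ℂ) : PowerSeries ℂ :=
  ∏ j : Fin p, PowerSeries.mk fun k => genBinom (μ j) k * (-(y j)) ^ k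

/-- The coefficient of `z^j` in the formal Laurent series `a(z) = z^N · A(z⁻¹) ∈ ℂ((z⁻¹))`,
namely the coefficient of `w^{N−j}` in `A(w)` (and `0` if `N − j < 0`). -/
noncomputable def laurentZCoeff (A : PowerSeries ℂ) (N : ℤ) (j : ℤ) : ℂ :=
  if 0 ≤ N - j then PowerSeries.coeff (N - j).toNat A else 0

lemma genBinom_zero (μ : ℂ) : genBinom μ 0 = 1 := by simp [genBinom]

lemma genBinom_one (μ : ℂ) : genBinom μ 1 = μ := by simp [genBinom]

lemma genBinom_succ_mul (μ : ℂ) (k : ℕ) :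
    ((k : ℂ) + 1) * genBinom μ (k + 1) = (μ - k) * genBinom μ k := by
  have hk : (k.factorial : ℂ) ≠ 0 := Nat.cast_ne_zero.mpr k.factorial_ne_zero
  have hk1 : (k : ℂ) + 1 ≠ 0 := Nat.cast_add_one_ne_zero k
  rw [genBinom, genBinom, Finset.prod_range_succ, Nat.factorial_succ]
  push_cast
  field_simp

lemma factor_ode (μc yy : ℂ) :
    (1 - PowerSeries.C yy * PowerSeries.X) *
      (PowerSeries.derivative ℂ (PowerSeries.mk fun k => genBinom μc k * (-yy) ^ k)) =
    PowerSeries.C (-(μc * yy)) * PowerSeries.mk fun k => genBinom μc k * (-yy) ^ k := by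
  set f : PowerSeries ℂ := PowerSeries.mk fun k => genBinom μc k * (-yy) ^ k with hf
  ext n
  rw [sub_mul, one_mul, map_sub, mul_assoc, PowerSeries.coeff_C_mul, PowerSeries.coeff_C_mul]
  cases n with
  | zero =>
    simp [PowerSeries.coeff_derivative, hf, PowerSeries.coeff_mk, genBinom_one, genBinom_zero]
  | succ n =>
    rw [PowerSeries.coeff_derivative, PowerSeries.coeff_succ_X_mul, PowerSeries.coeff_derivative,
      hf, PowerSeries.coeff_mk, PowerSeries.coeff_mk]
    have h := genBinom_succ_mul μc (n + 1)
    push_cast at h ⊢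
    linear_combination (-yy) ^ (n + 1) * (-yy) * h

lemma PS_deriv_finset_prod {ι : Type*} [DecidableEq ι] (s : Finset ι) (f : ι → PowerSeries ℂ) :
    PowerSeries.derivative ℂ (∏ i ∈ s, f i) =
      ∑ i ∈ s, (∏ j ∈ s.erase i, f j) * PowerSeries.derivative ℂ (f i) := by
  classical
  induction s using Finset.induction_on with
  | empty => simp
  | @insert a s ha ih =>
    rw [Finset.prod_insert ha, Derivation.leibniz, ih, Finset.sum_insert ha,
      Finset.erase_insert ha]
    rw [smul_eq_mul, smul_eq_mul, Finset.mul_sum]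
    rw [add_comm]
    congr 1
    refine Finset.sum_congr rfl fun i hi => ?_
    rw [Finset.erase_insert_of_ne (ne_of_mem_of_not_mem hi ha).symm, Finset.prod_insert
      (fun h => ha (Finset.mem_of_mem_erase h))]
    ring

lemma prod_ode (p : ℕ) (y μ : Fin p → ℂ) :
    (∏ j : Fin p, (1 - PowerSeries.C (y j) * PowerSeries.X)) *
      PowerSeries.derivative ℂ (binomProdSeries p y μ) =
    (∑ j : Fin p, PowerSeries.C (-(μ j * y j)) *
      ∏ l ∈ Finset.univ.erase j, (1 - PowerSeries.C (y l) * PowerSeries.X)) *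
      binomProdSeries p y μ := by
  rw [binomProdSeries, PS_deriv_finset_prod, Finset.mul_sum, Finset.sum_mul]
  refine Finset.sum_congr rfl fun j _ => ?_
  have h1 := factor_ode (μ j) (y j)
  rw [← Finset.mul_prod_erase Finset.univ
    (fun l => 1 - PowerSeries.C (y l) * PowerSeries.X) (Finset.mem_univ j)]
  rw [← Finset.mul_prod_erase Finset.univ
    (fun l => PowerSeries.mk fun k => genBinom (μ l) k * (-(y l)) ^ k) (Finset.mem_univ j)]
  linear_combination (∏ l ∈ Finset.univ.erase j, (1 - PowerSeries.C (y l) * PowerSeries.X)) *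
    (∏ l ∈ Finset.univ.erase j, PowerSeries.mk fun k => genBinom (μ l) k * (-(y l)) ^ k) * h1

lemma coe_linProd {ι : Type*} (s : Finset ι) (c : ι → ℂ) :
    ((∏ j ∈ s, (1 - Polynomial.C (c j) * Polynomial.X) : Polynomial ℂ) : PowerSeries ℂ) =
      ∏ j ∈ s, (1 - PowerSeries.C (c j) * PowerSeries.X) := by
  rw [← Polynomial.coeToPowerSeries.ringHom_apply, map_prod]
  refine Finset.prod_congr rfl fun j _ => ?_
  rw [map_sub, map_one, map_mul, Polynomial.coeToPowerSeries.ringHom_apply,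
    Polynomial.coeToPowerSeries.ringHom_apply, Polynomial.coe_C, Polynomial.coe_X]

lemma lin_natDegree_le (a : ℂ) : (1 - Polynomial.C a * Polynomial.X).natDegree ≤ 1 := by
  compute_degree

lemma linProd_natDegree_le {ι : Type*} (s : Finset ι) (c : ι → ℂ) :
    (∏ j ∈ s, (1 - Polynomial.C (c j) * Polynomial.X)).natDegree ≤ s.card := by
  have h1 := Polynomial.natDegree_prod_le s (fun j => 1 - Polynomial.C (c j) * Polynomial.X)
  have h2 : ∑ j ∈ s, (1 - Polynomial.C (c j) * Polynomial.X).natDegree ≤ s.card := by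
    have := Finset.sum_le_sum (s := s)
      (f := fun j => (1 - Polynomial.C (c j) * Polynomial.X).natDegree)
      (g := fun _ => 1) (fun j _ => lin_natDegree_le (c j))
    simpa using this
  exact le_trans h1 h2

lemma lin_coeff_one (a : ℂ) : (1 - Polynomial.C a * Polynomial.X).coeff 1 = -a := by
  simp [Polynomial.coeff_one]

lemma linProd_coeff_card {ι : Type*} (s : Finset ι) (c : ι → ℂ) :
    (∏ j ∈ s, (1 - Polynomial.C (c j) * Polynomial.X)).coeff s.card = ∏ j ∈ s, -(c j) := by
  have h := Polynomial.coeff_prod_of_natDegree_le (s := s)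
    (f := fun j => 1 - Polynomial.C (c j) * Polynomial.X) 1 (fun j _ => lin_natDegree_le (c j))
  rw [mul_one] at h
  rw [h]
  exact Finset.prod_congr rfl fun j _ => lin_coeff_one (c j)

lemma linProd_coeff_zero {ι : Type*} (s : Finset ι) (c : ι → ℂ) :
    (∏ j ∈ s, (1 - Polynomial.C (c j) * Polynomial.X)).coeff 0 = 1 := by
  rw [Polynomial.coeff_zero_prod]
  refine Finset.prod_eq_one fun j _ => ?_
  simp

/-- Let `p ≥ 1`, let `y₁,…,y_p` be distinct complex numbers, and let `μ₁,…,μ_p ∈ ℂ` be such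
that `N = Σⱼ μⱼ` is an integer with `N > −p`.  Consider the formal Laurent series
`a(z) = z^N ∏ⱼ (1 − yⱼ/z)^{μⱼ} ∈ ℂ((z⁻¹))`.  If for every `i = 0,…,p−2` the coefficient of
`z⁻¹` in `a(z)·z^i` (i.e. the coefficient of `z^{−1−i}` in `a(z)`) vanishes, then `a(z)` is
a polynomial in `z`: its coefficient of `z^{−k}` vanishes for every `k ≥ 1`. -/
theorem residue_vanishing_implies_polynomial (p : ℕ) (hp : 1 ≤ p)
    (y μ : Fin p → ℂ) (hy : Function.Injective y)
    (N : ℤ) (hNsum : (N : ℂ) = ∑ j : Fin p, μ j) (hNp : -(p : ℤ) < N)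
    (hres : ∀ i : ℕ, i + 2 ≤ p →
      laurentZCoeff (binomProdSeries p y μ) N (-1 - (i : ℤ)) = 0) :
    ∀ k : ℕ, 1 ≤ k → laurentZCoeff (binomProdSeries p y μ) N (-(k : ℤ)) = 0 := by
  classical
  set A : PowerSeries ℂ := binomProdSeries p y μ with hA
  suffices H : ∀ n : ℕ, N < (n : ℤ) → PowerSeries.coeff n A = 0 by
    intro k hk
    simp only [laurentZCoeff]
    split_ifs with h
    · exact H _ (by omega)
    · rfl
  intro n
  induction n using Nat.strong_induction_on with
  | _ n IH =>
  intro hn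
  by_cases hcase : (n : ℤ) < N + p
  · -- follows from the residue hypotheses
    have hi2 : ((n : ℤ) - N - 1).toNat + 2 ≤ p := by omega
    have hr := hres _ hi2
    simp only [laurentZCoeff] at hr
    have he : N - (-1 - (((n : ℤ) - N - 1).toNat : ℤ)) = (n : ℤ) := by omega
    rw [he, if_pos (by omega : (0:ℤ) ≤ (n:ℤ))] at hr
    simpa using hr
  push_neg at hcase
  have hn1 : 1 ≤ n := by omega
  -- the polynomials defining the ODE satisfied by A
  set Qp : Polynomial ℂ := ∏ j : Fin p, (1 - Polynomial.C (y j) * Polynomial.X) with hQp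
  set Pp : Polynomial ℂ := ∑ j : Fin p, Polynomial.C (-(μ j * y j)) *
      ∏ l ∈ Finset.univ.erase j, (1 - Polynomial.C (y l) * Polynomial.X) with hPp
  have hcoeP : ((Pp : Polynomial ℂ) : PowerSeries ℂ) =
      ∑ j : Fin p, PowerSeries.C (-(μ j * y j)) *
        ∏ l ∈ Finset.univ.erase j, (1 - PowerSeries.C (y l) * PowerSeries.X) := by
    rw [hPp, ← Polynomial.coeToPowerSeries.ringHom_apply, map_sum]
    refine Finset.sum_congr rfl fun j _ => ?_
    rw [map_mul, Polynomial.coeToPowerSeries.ringHom_apply,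
      Polynomial.coeToPowerSeries.ringHom_apply, Polynomial.coe_C, coe_linProd]
  have hODE : (Qp : PowerSeries ℂ) * PowerSeries.derivative ℂ A =
      (Pp : PowerSeries ℂ) * A := by
    rw [hQp, coe_linProd, hcoeP, hA]
    exact prod_ode p y μ
  -- coefficient facts about Qp and Pp
  have hcardU : (Finset.univ : Finset (Fin p)).card = p := by
    rw [Finset.card_univ, Fintype.card_fin]
  have hQ0 : Qp.coeff 0 = 1 := by rw [hQp]; exact linProd_coeff_zero _ _
  have hQcp : Qp.coeff p = ∏ j : Fin p, -(y j) := by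
    have h := linProd_coeff_card (Finset.univ : Finset (Fin p)) y
    rw [hcardU] at h
    rw [hQp]; exact h
  have hQtop : ∀ i, p < i → Qp.coeff i = 0 := by
    intro i hi
    refine Polynomial.coeff_eq_zero_of_natDegree_lt (lt_of_le_of_lt ?_ hi)
    rw [hQp]
    exact le_trans (linProd_natDegree_le _ _) (le_of_eq hcardU)
  have hcardE : ∀ j : Fin p, (Finset.univ.erase j).card = p - 1 := by
    intro j
    rw [Finset.card_erase_of_mem (Finset.mem_univ j), hcardU]
  have hPtop : ∀ i, p ≤ i → Pp.coeff i = 0 := by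
    intro i hi
    rw [hPp, Polynomial.finset_sum_coeff]
    refine Finset.sum_eq_zero fun j _ => ?_
    rw [Polynomial.coeff_C_mul]
    rw [Polynomial.coeff_eq_zero_of_natDegree_lt
      (lt_of_le_of_lt (le_trans (linProd_natDegree_le _ _) (le_of_eq (hcardE j))) (by omega)),
      mul_zero]
  have hPc : Pp.coeff (p - 1) = (N : ℂ) * Qp.coeff p := by
    rw [hPp, Polynomial.finset_sum_coeff]
    calc ∑ j : Fin p, (Polynomial.C (-(μ j * y j)) *
          ∏ l ∈ Finset.univ.erase j, (1 - Polynomial.C (y l) * Polynomial.X)).coeff (p-1)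
        = ∑ j : Fin p, μ j * ∏ l : Fin p, -(y l) := by
          refine Finset.sum_congr rfl fun j _ => ?_
          rw [Polynomial.coeff_C_mul]
          have hc := linProd_coeff_card (Finset.univ.erase j) y
          rw [hcardE j] at hc
          rw [hc, ← Finset.mul_prod_erase Finset.univ (fun l => -(y l)) (Finset.mem_univ j)]
          ring
      _ = (N : ℂ) * Qp.coeff p := by
          rw [← Finset.sum_mul, ← hNsum, hQcp]
  -- extract the coefficient of degree n-1 from the ODE
  have h0 := congrArg (PowerSeries.coeff (n - 1)) hODE
  rw [PowerSeries.coeff_mul, PowerSeries.coeff_mul,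
    Finset.Nat.sum_antidiagonal_eq_sum_range_succ_mk,
    Finset.Nat.sum_antidiagonal_eq_sum_range_succ_mk] at h0
  have hnn : n - 1 + 1 = n := by omega
  simp only [Nat.succ_eq_add_one, hnn, Polynomial.coeff_coe] at h0
  set F : ℕ → ℂ := fun i =>
    Qp.coeff i * PowerSeries.coeff (n - 1 - i) (PowerSeries.derivative ℂ A) with hF
  set G : ℕ → ℂ := fun i => Pp.coeff i * PowerSeries.coeff (n - 1 - i) A with hG
  have h0' : ∑ i ∈ Finset.range n, F i = ∑ i ∈ Finset.range n, G i := h0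
  -- derivative coefficients
  have hder : ∀ i, i < n → PowerSeries.coeff (n - 1 - i) (PowerSeries.derivative ℂ A) =
      ((n - i : ℕ) : ℂ) * PowerSeries.coeff (n - i) A := by
    intro i hi
    rw [PowerSeries.coeff_derivative]
    have h1 : n - 1 - i + 1 = n - i := by omega
    have h2 : ((n - 1 - i : ℕ) : ℂ) + 1 = ((n - i : ℕ) : ℂ) := by
      exact_mod_cast congrArg (Nat.cast (R := ℂ)) h1
    rw [h1, h2, mul_comm]
  -- splitting the two sums
  have hFsplit : ∀ i ∈ Finset.range n, F i =
      (if i = 0 then F 0 else 0) + (if i = p then F p else 0) := by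
    intro i hi
    have hin : i < n := Finset.mem_range.mp hi
    by_cases h0c : i = 0
    · subst h0c; rw [if_pos rfl, if_neg (by omega), add_zero]
    by_cases hpc : i = p
    · subst hpc; rw [if_neg h0c, if_pos rfl, zero_add]
    rw [if_neg h0c, if_neg hpc, add_zero]
    rcases lt_or_ge p i with h | h
    · rw [hF]; simp only; rw [hQtop i h, zero_mul]
    · have hlt : i < p := lt_of_le_of_ne h hpc
      have hz := IH (n - i) (by omega) (by omega)
      rw [hF]; simp only
      rw [hder i hin, hz, mul_zero, mul_zero]
  have hGsplit : ∀ i ∈ Finset.range n, G i = (if i = p - 1 then G (p - 1) else 0) := by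
    intro i hi
    have hin : i < n := Finset.mem_range.mp hi
    by_cases hpc : i = p - 1
    · subst hpc; rw [if_pos rfl]
    rw [if_neg hpc]
    rcases le_or_gt p i with h | h
    · rw [hG]; simp only; rw [hPtop i h, zero_mul]
    · have hlt : i < p - 1 := by omega
      have hz := IH (n - 1 - i) (by omega) (by omega)
      rw [hG]; simp only; rw [hz, mul_zero]
  have hFs : ∑ i ∈ Finset.range n, F i = F 0 + (if p ∈ Finset.range n then F p else 0) := by
    rw [Finset.sum_congr rfl hFsplit, Finset.sum_add_distrib,
      Finset.sum_ite_eq' (Finset.range n) 0 (fun _ => F 0),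
      Finset.sum_ite_eq' (Finset.range n) p (fun _ => F p),
      if_pos (Finset.mem_range.mpr (by omega : 0 < n))]
  have hGs : ∑ i ∈ Finset.range n, G i =
      (if p - 1 ∈ Finset.range n then G (p - 1) else 0) := by
    rw [Finset.sum_congr rfl hGsplit,
      Finset.sum_ite_eq' (Finset.range n) (p - 1) (fun _ => G (p - 1))]
  have hF0 : F 0 = ((n : ℕ) : ℂ) * PowerSeries.coeff n A := by
    rw [hF]; simp only
    rw [hQ0, one_mul, hder 0 (by omega), Nat.sub_zero]
  -- the two boundary terms agree
  have hIf : (if p ∈ Finset.range n then F p else 0) =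
      (if p - 1 ∈ Finset.range n then G (p - 1) else 0) := by
    by_cases hpn : p < n
    · have hp1n : p - 1 < n := by omega
      rw [if_pos (Finset.mem_range.mpr hpn), if_pos (Finset.mem_range.mpr hp1n)]
      have hidx : n - 1 - (p - 1) = n - p := by omega
      have hGp : G (p - 1) = (N : ℂ) * Qp.coeff p * PowerSeries.coeff (n - p) A := by
        rw [hG]; simp only
        rw [hidx, hPc, mul_assoc]
      have hFp : F p = Qp.coeff p * (((n - p : ℕ) : ℂ) * PowerSeries.coeff (n - p) A) := by
        rw [hF]; simp only
        rw [hder p hpn]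
      by_cases hNn : ((n - p : ℕ) : ℤ) = N
      · have hc : ((n - p : ℕ) : ℂ) = (N : ℂ) := by
          rw [← hNn]; push_cast; ring
        rw [hFp, hGp, hc]; ring
      · have hz := IH (n - p) (by omega) (by omega)
        rw [hFp, hGp, hz]; ring
    · rw [if_neg (fun h => hpn (Finset.mem_range.mp h))]
      by_cases hp1n : p - 1 < n
      · rw [if_pos (Finset.mem_range.mpr hp1n)]
        have hpn' : p = n := by omega
        by_cases hN0 : N = 0
        · rw [hG]; simp only
          rw [hPc, hN0]
          simp
        · have hz := IH (n - 1 - (p - 1)) (by omega) (by omega)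
          rw [hG]; simp only
          rw [hz, mul_zero]
      · rw [if_neg (fun h => hp1n (Finset.mem_range.mp h))]
  -- conclude
  rw [hFs, hGs, hIf, hF0] at h0'
  have hmain : ((n : ℕ) : ℂ) * PowerSeries.coeff n A = 0 := by
    have := h0'
    rwa [add_eq_right] at this
  have hne : ((n : ℕ) : ℂ) ≠ 0 := Nat.cast_ne_zero.mpr (by omega)
  exact (mul_eq_zero.mp hmain).resolve_left hne
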